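/- Let T be a finite AND/OR tree with root s, edge costs c, heuristic h at non-terminal leaves, and cost function p computed with Ψ = sum. Define the cost of a solution base B rooted at s as the sum of c(n, n') over all edges (n, n') of B plus the sum of h over all non-terminal leaves of B, with the cost being ∞ if B contains an unsolvable terminal leaf (solvable terminal leaves contribute 0). Then p(s) equals the minimum of this cost over all solution bases rooted at s, and this minimum is attained by the greedy solution base obtained by including, at each internal OR node, a child minimizing c + p (and all children at each AND node). Hence the partial solution graph traced by AO* by following minimum-cost children achieves the recursive cost estimate p(s). -/

import Mathlib

open scoped ENNReal

/-- A node of an AND/OR graph is labeled either OR or AND. -/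
inductive NodeKind : Type
  | orN
  | andN
deriving DecidableEq

/-- A leaf is a solvable terminal, an unsolvable terminal, or a non-terminal leaf. -/
inductive LeafKind : Type
  | solv
  | unsolv
  | nonterm
deriving DecidableEq

/-- The combination rule `Ψ ∈ {sum, max}`. -/
inductive CombRule : Type
  | sum
  | max

/-- A finite acyclic AND/OR graph on a node type `V`: a successor function
(`succ n = ∅` means `n` is a leaf), an OR/AND label on each node, a
terminal/non-terminal designation for leaves, edge costs in `ℝ≥0∞`, and
well-foundedness of the successor relation (no directed cycles). -/
structure AOGraph (V : Type) where
  succ : V → Finset V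
  kind : V → NodeKind
  leafKind : V → LeafKind
  cost : V → V → ℝ≥0∞
  acyclic : WellFounded (fun a b : V => a ∈ succ b)

/-- Combining the values of the successors by `Ψ`. -/
noncomputable def comb {V : Type} (Ψ : CombRule) (s : Finset V) (f : V → ℝ≥0∞) : ℝ≥0∞ :=
  match Ψ with
  | .sum => ∑ x ∈ s, f x
  | .max => s.sup f

/-- `p` is the proof-cost function of `G` with heuristic `h` and rule `Ψ`. -/
def IsProofCost {V : Type} (G : AOGraph V) (h : V → ℝ≥0∞) (Ψ : CombRule)
    (p : V → ℝ≥0∞) : Prop :=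
  ∀ n : V,
    (G.succ n = ∅ →
      p n = (match G.leafKind n with
             | .solv => 0
             | .unsolv => ⊤
             | .nonterm => h n)) ∧
    (G.succ n ≠ ∅ →
      p n = (match G.kind n with
             | .orN => (G.succ n).inf (fun m => G.cost n m + p m)
             | .andN => comb Ψ (G.succ n) (fun m => G.cost n m + p m)))

/-- `d` is the disproof-cost function of `G` with heuristic `h̄` and rule `Ψ`. -/
def IsDisproofCost {V : Type} (G : AOGraph V) (hb : V → ℝ≥0∞) (Ψ : CombRule)
    (d : V → ℝ≥0∞) : Prop :=
  ∀ n : V,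
    (G.succ n = ∅ →
      d n = (match G.leafKind n with
             | .solv => ⊤
             | .unsolv => 0
             | .nonterm => hb n)) ∧
    (G.succ n ≠ ∅ →
      d n = (match G.kind n with
             | .orN => comb Ψ (G.succ n) (fun m => G.cost n m + d m)
             | .andN => (G.succ n).inf (fun m => G.cost n m + d m)))

/-- `B` is (the node set of) a solution base rooted at `s`: a subtree
containing `s` (every other element has a parent in `B`), exactly one child of
each of its internal OR nodes, and all children of each of its internal AND
nodes. -/
def IsSolutionBase {V : Type} (G : AOGraph V) (s : V) (B : Finset V) : Prop :=
  s ∈ B ∧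
  (∀ y ∈ B, y ≠ s → ∃ z ∈ B, y ∈ G.succ z) ∧
  (∀ y ∈ B, G.succ y ≠ ∅ → G.kind y = .orN → ∃! z : V, z ∈ G.succ y ∧ z ∈ B) ∧
  (∀ y ∈ B, G.succ y ≠ ∅ → G.kind y = .andN → ∀ z ∈ G.succ y, z ∈ B)

open Classical in
/-- The cost of a solution base `B`: `∞` if `B` contains an unsolvable
terminal leaf; otherwise the sum of the edge costs `c(n, n')` over the edges
of `B` plus the sum of `h` over the non-terminal leaves of `B` (solvable
terminal leaves contribute `0`). -/
noncomputable def baseCost {V : Type} [Fintype V] [DecidableEq V]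
    (G : AOGraph V) (h : V → ℝ≥0∞) (B : Finset V) : ℝ≥0∞ :=
  if ∃ y ∈ B, G.succ y = ∅ ∧ G.leafKind y = .unsolv then ⊤
  else (∑ n ∈ B, ∑ m ∈ G.succ n ∩ B, G.cost n m) +
       ∑ y ∈ B, (if G.succ y = ∅ ∧ G.leafKind y = .nonterm then h y else 0)

/-- A greedy solution base: a solution base in which the child included at
each internal OR node minimizes `c + p` among the successors. -/
def IsGreedySolutionBase {V : Type} (G : AOGraph V) (p : V → ℝ≥0∞) (s : V)
    (B : Finset V) : Prop :=
  IsSolutionBase G s B ∧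
  ∀ y ∈ B, G.succ y ≠ ∅ → G.kind y = .orN →
    ∀ z ∈ G.succ y, z ∈ B → ∀ w ∈ G.succ y, G.cost y z + p z ≤ G.cost y w + p w


/-! ### Auxiliary development -/

section AOAux

open Relation

variable {V : Type}

/-- The child relation of an AND/OR graph. -/
abbrev AOGraph.chld (G : AOGraph V) : V → V → Prop := fun a b => a ∈ G.succ b

theorem AOGraph.noCyc (G : AOGraph V) (a : V) : ¬ Relation.TransGen G.chld a a := by
  have h : IsIrrefl V (Relation.TransGen G.chld) :=
    @WellFounded.isIrrefl V _ (WellFounded.transGen G.acyclic)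
  exact h.irrefl a

/-- The parent direction is also well-founded on a finite type. -/
theorem AOGraph.wfUp [Fintype V] (G : AOGraph V) :
    WellFounded (fun b a : V => a ∈ G.succ b) := by
  have h1 : IsTrans V (fun a b => Relation.TransGen G.chld b a) :=
    ⟨fun a b c h1 h2 => h2.trans h1⟩
  have h2 : IsIrrefl V (fun a b => Relation.TransGen G.chld b a) :=
    ⟨fun a h => G.noCyc a h⟩
  exact Subrelation.wf (fun {a b} hab => Relation.TransGen.single hab)
    (@Finite.wellFounded_of_trans_of_irrefl V _ _ h1 h2)

/-- In a tree, two ancestors of a common node are comparable. -/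
theorem AOGraph.chain (G : AOGraph V)
    (htree : ∀ x n n' : V, x ∈ G.succ n → x ∈ G.succ n' → n = n')
    {y a b : V} (hya : ReflTransGen G.chld y a) (hyb : ReflTransGen G.chld y b) :
    ReflTransGen G.chld a b ∨ ReflTransGen G.chld b a := by
  induction hya using Relation.ReflTransGen.head_induction_on generalizing b with
  | refl => exact Or.inl hyb
  | head h' hca ih =>
    rename_i y' c
    rcases hyb.cases_head with rfl | ⟨w, hw, hwb⟩
    · exact Or.inr (Relation.ReflTransGen.head h' hca)
    · have : c = w := htree y' c w h' hw
      exact ih (this ▸ hwb)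

/-- Two children of the same node that are comparable are equal. -/
theorem AOGraph.sibling (G : AOGraph V)
    (htree : ∀ x n n' : V, x ∈ G.succ n → x ∈ G.succ n' → n = n')
    {s m m' : V} (hm : m ∈ G.succ s) (hm' : m' ∈ G.succ s)
    (hc : ReflTransGen G.chld m m') : m = m' := by
  rcases hc.cases_head with rfl | ⟨w, hw, hwm'⟩
  · rfl
  · have hws : w = s := htree m w s hw hm
    rw [hws] at hwm'
    exact ((G.noCyc s) (Relation.TransGen.tail' hwm' hm')).elim

end AOAux

section AOSB

open Relation

variable {V : Type} [Fintype V] [DecidableEq V] {G : AOGraph V} {s : V} {B : Finset V}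

attribute [local instance] Classical.propDecidable
set_option linter.unusedSectionVars false
set_option linter.unusedVariables false

/-- In a solution base, every node is either the root or lies below some
child of the root that belongs to the base. -/
theorem sb_desc (hB : IsSolutionBase G s B) :
    ∀ y ∈ B, y = s ∨ ∃ m, m ∈ G.succ s ∧ m ∈ B ∧ ReflTransGen G.chld y m := by
  intro y hy
  induction y using G.wfUp.induction with
  | _ y ih =>
    by_cases hys : y = s
    · exact Or.inl hys
    · obtain ⟨z, hzB, hyz⟩ := hB.2.1 y hy hys
      by_cases hzs : z = s
      · exact Or.inr ⟨y, hzs ▸ hyz, hy, ReflTransGen.refl⟩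
      · rcases ih z hyz hzB with rfl | ⟨m, hm1, hm2, hm3⟩
        · exact absurd rfl hzs
        · exact Or.inr ⟨m, hm1, hm2, ReflTransGen.head hyz hm3⟩

theorem sb_reach (hB : IsSolutionBase G s B) :
    ∀ y ∈ B, ReflTransGen G.chld y s := by
  intro y hy
  rcases sb_desc hB y hy with rfl | ⟨m, hm1, _, hm3⟩
  · exact ReflTransGen.refl
  · exact hm3.tail hm1

theorem sb_noup (hB : IsSolutionBase G s B) :
    ∀ y ∈ B, s ∉ G.succ y := by
  intro y hy hsy
  exact G.noCyc s (Relation.TransGen.head' hsy (sb_reach hB y hy))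

/-- The part of `B` lying (weakly) below `m`. -/
noncomputable def subBase (G : AOGraph V) (B : Finset V) (m : V) : Finset V :=
  B.filter (fun y => ReflTransGen G.chld y m)

theorem mem_subBase {m y : V} :
    y ∈ subBase G B m ↔ y ∈ B ∧ ReflTransGen G.chld y m := by
  simp [subBase]

theorem subBase_subset (m : V) : subBase G B m ⊆ B := Finset.filter_subset _ _

theorem root_not_mem_subBase (hne : s ∉ B ∨ True) {m : V} (hm : m ∈ G.succ s) :
    s ∉ subBase G B m := by
  intro hmem
  exact G.noCyc s (Relation.TransGen.tail' (mem_subBase.1 hmem).2 hm)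

/-- `subBase G B m` is a solution base rooted at `m`. -/
theorem subBase_isSolutionBase
    (htree : ∀ x n n' : V, x ∈ G.succ n → x ∈ G.succ n' → n = n')
    (hB : IsSolutionBase G s B) {m : V} (hm : m ∈ G.succ s) (hmB : m ∈ B) :
    IsSolutionBase G m (subBase G B m) := by
  have hs_not : s ∉ subBase G B m := root_not_mem_subBase (Or.inr trivial) hm
  refine ⟨mem_subBase.2 ⟨hmB, ReflTransGen.refl⟩, ?_, ?_, ?_⟩
  · intro y hy hym
    obtain ⟨hyB, hyr⟩ := mem_subBase.1 hy
    have hys : y ≠ s := fun hys => hs_not (hys ▸ hy)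
    obtain ⟨z, hzB, hyz⟩ := hB.2.1 y hyB hys
    rcases hyr.cases_head with rfl | ⟨w, hw, hwm⟩
    · exact absurd rfl hym
    · have : z = w := (htree y w z hw hyz).symm
      exact ⟨z, mem_subBase.2 ⟨hzB, this ▸ hwm⟩, hyz⟩
  · intro y hy hyne hkind
    obtain ⟨hyB, hyr⟩ := mem_subBase.1 hy
    obtain ⟨z, ⟨hz1, hz2⟩, hzu⟩ := hB.2.2.1 y hyB hyne hkind
    refine ⟨z, ⟨hz1, mem_subBase.2 ⟨hz2, ReflTransGen.head hz1 hyr⟩⟩, ?_⟩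
    intro z' ⟨hz1', hz2'⟩
    exact hzu z' ⟨hz1', (mem_subBase.1 hz2').1⟩
  · intro y hy hyne hkind z hz
    obtain ⟨hyB, hyr⟩ := mem_subBase.1 hy
    exact mem_subBase.2 ⟨hB.2.2.2 y hyB hyne hkind z hz, ReflTransGen.head hz hyr⟩

/-- The sub-bases below distinct children of the root are disjoint. -/
theorem subBase_disjoint
    (htree : ∀ x n n' : V, x ∈ G.succ n → x ∈ G.succ n' → n = n')
    {m m' : V} (hm : m ∈ G.succ s) (hm' : m' ∈ G.succ s) (hne : m ≠ m') :
    Disjoint (subBase G B m) (subBase G B m') := by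
  rw [Finset.disjoint_left]
  intro y hy hy'
  obtain ⟨_, h1⟩ := mem_subBase.1 hy
  obtain ⟨_, h2⟩ := mem_subBase.1 hy'
  rcases G.chain htree h1 h2 with hc | hc
  · exact hne (G.sibling htree hm hm' hc)
  · exact hne (G.sibling htree hm' hm hc).symm

/-- The children of a node of a sub-base that lie in `B` lie in the sub-base. -/
theorem succ_inter_subBase
    (hB : IsSolutionBase G s B) {m n : V} (hn : n ∈ subBase G B m) :
    G.succ n ∩ B = G.succ n ∩ subBase G B m := by
  obtain ⟨hnB, hnr⟩ := mem_subBase.1 hn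
  ext z
  simp only [Finset.mem_inter]
  constructor
  · rintro ⟨hz1, hz2⟩
    exact ⟨hz1, mem_subBase.2 ⟨hz2, ReflTransGen.head hz1 hnr⟩⟩
  · rintro ⟨hz1, hz2⟩
    exact ⟨hz1, (mem_subBase.1 hz2).1⟩

/-- Decomposition of a solution base as root plus sub-bases. -/
theorem sb_eq_insert_biUnion
    (hB : IsSolutionBase G s B) (hne : G.succ s ≠ ∅) :
    B = insert s ((G.succ s ∩ B).biUnion (subBase G B)) := by
  ext y
  simp only [Finset.mem_insert, Finset.mem_biUnion, Finset.mem_inter]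
  constructor
  · intro hy
    rcases sb_desc hB y hy with rfl | ⟨m, h1, h2, h3⟩
    · exact Or.inl rfl
    · exact Or.inr ⟨m, ⟨h1, h2⟩, mem_subBase.2 ⟨hy, h3⟩⟩
  · rintro (rfl | ⟨m, _, hy⟩)
    · exact hB.1
    · exact (mem_subBase.1 hy).1

end AOSB

section AOCost

open Relation

variable {V : Type} [Fintype V] [DecidableEq V] {G : AOGraph V} {s : V} {B : Finset V}

attribute [local instance] Classical.propDecidable
set_option linter.unusedSectionVars false
set_option linter.unusedVariables false

/-- The key recursive decomposition of the cost of a solution base. -/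
theorem baseCost_decomp
    (htree : ∀ x n n' : V, x ∈ G.succ n → x ∈ G.succ n' → n = n')
    (h : V → ℝ≥0∞) (hB : IsSolutionBase G s B) (hne : G.succ s ≠ ∅) :
    baseCost G h B
      = ∑ m ∈ G.succ s ∩ B, (G.cost s m + baseCost G h (subBase G B m)) := by
  classical
  set U := (G.succ s ∩ B).biUnion (subBase G B) with hU
  have hcover : B = insert s U := sb_eq_insert_biUnion hB hne
  have hsnotU : s ∉ U := by
    intro hmem
    rw [hU, Finset.mem_biUnion] at hmem
    obtain ⟨m, hm, hsm⟩ := hmem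
    exact root_not_mem_subBase (Or.inr trivial) (Finset.mem_inter.1 hm).1 hsm
  have hdisj : (↑(G.succ s ∩ B) : Set V).PairwiseDisjoint (subBase G B) := by
    intro m hm m' hm' hmm'
    exact subBase_disjoint htree (Finset.mem_inter.1 (Finset.mem_coe.1 hm)).1
      (Finset.mem_inter.1 (Finset.mem_coe.1 hm')).1 hmm'
  have hiff : (∃ y ∈ B, G.succ y = ∅ ∧ G.leafKind y = .unsolv) ↔
      ∃ m ∈ G.succ s ∩ B, ∃ y ∈ subBase G B m,
        G.succ y = ∅ ∧ G.leafKind y = .unsolv := by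
    constructor
    · rintro ⟨y, hy, hy2⟩
      rcases sb_desc hB y hy with rfl | ⟨m, h1, h2, h3⟩
      · exact absurd hy2.1 hne
      · exact ⟨m, Finset.mem_inter.2 ⟨h1, h2⟩, y, mem_subBase.2 ⟨hy, h3⟩, hy2⟩
    · rintro ⟨m, hm, y, hy, hy2⟩
      exact ⟨y, (mem_subBase.1 hy).1, hy2⟩
  by_cases htop : ∃ y ∈ B, G.succ y = ∅ ∧ G.leafKind y = .unsolv
  · rw [baseCost, if_pos htop]
    obtain ⟨m, hm, y, hy, hy2⟩ := hiff.1 htop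
    symm
    refine ENNReal.sum_eq_top.2 ⟨m, hm, ?_⟩
    rw [baseCost, if_pos ⟨y, hy, hy2⟩]
    simp
  · have hnotm : ∀ m ∈ G.succ s ∩ B,
        ¬∃ y ∈ subBase G B m, G.succ y = ∅ ∧ G.leafKind y = .unsolv := by
      intro m hm hex
      exact htop (hiff.2 ⟨m, hm, hex⟩)
    have hEm : ∀ m ∈ G.succ s ∩ B,
        G.cost s m + baseCost G h (subBase G B m)
          = G.cost s m +
            ((∑ n ∈ subBase G B m, ∑ z ∈ G.succ n ∩ B, G.cost n z) +
             ∑ y ∈ subBase G B m,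
               (if G.succ y = ∅ ∧ G.leafKind y = .nonterm then h y else 0)) := by
      intro m hm
      rw [baseCost, if_neg (hnotm m hm)]
      congr 2
      refine Finset.sum_congr rfl (fun n hn => ?_)
      rw [← succ_inter_subBase hB hn]
    rw [baseCost, if_neg htop, Finset.sum_congr rfl hEm]
    have key : ∀ f : V → ℝ≥0∞,
        ∑ n ∈ B, f n = f s + ∑ m ∈ G.succ s ∩ B, ∑ n ∈ subBase G B m, f n := by
      intro f
      conv_lhs => rw [hcover]
      rw [Finset.sum_insert hsnotU, hU, Finset.sum_biUnion hdisj]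
    have h1 : (∑ n ∈ B, ∑ z ∈ G.succ n ∩ B, G.cost n z)
        = (∑ z ∈ G.succ s ∩ B, G.cost s z) +
          ∑ m ∈ G.succ s ∩ B, ∑ n ∈ subBase G B m, ∑ z ∈ G.succ n ∩ B, G.cost n z :=
      key _
    have h2 : (∑ y ∈ B, (if G.succ y = ∅ ∧ G.leafKind y = .nonterm then h y else 0))
        = (if G.succ s = ∅ ∧ G.leafKind s = .nonterm then h s else 0) +
          ∑ m ∈ G.succ s ∩ B, ∑ y ∈ subBase G B m,
            (if G.succ y = ∅ ∧ G.leafKind y = .nonterm then h y else 0) :=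
      key _
    have hLs : (if G.succ s = ∅ ∧ G.leafKind s = .nonterm then h s else 0) = 0 :=
      if_neg (fun hc => hne hc.1)
    rw [h1, h2, hLs, zero_add, Finset.sum_add_distrib, Finset.sum_add_distrib]
    ring


theorem baseCost_singleton (h : V → ℝ≥0∞) {p : V → ℝ≥0∞}
    (hp : IsProofCost G h .sum p) (hleaf : G.succ s = ∅) :
    baseCost G h {s} = p s := by
  have hps := (hp s).1 hleaf
  cases hk : G.leafKind s <;>
    rw [hk] at hps <;> simp [baseCost, hleaf, hps, hk]

/-- Lower bound: `p s` is at most the cost of every solution base. -/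
theorem p_le_baseCost
    (htree : ∀ x n n' : V, x ∈ G.succ n → x ∈ G.succ n' → n = n')
    (h : V → ℝ≥0∞) {p : V → ℝ≥0∞} (hp : IsProofCost G h .sum p) :
    ∀ s B, IsSolutionBase G s B → p s ≤ baseCost G h B := by
  intro s
  induction s using G.acyclic.induction with
  | _ s ih =>
    intro B hB
    by_cases hne : G.succ s = ∅
    · have hBs : B = {s} := by
        ext y
        simp only [Finset.mem_singleton]
        constructor
        · intro hy
          rcases sb_desc hB y hy with rfl | ⟨m, hm, _, _⟩
          · rfl
          · rw [hne] at hm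
            exact absurd hm (Finset.notMem_empty m)
        · rintro rfl
          exact hB.1
      rw [hBs, baseCost_singleton h hp hne]
    · rw [baseCost_decomp htree h hB hne]
      have hrec := (hp s).2 hne
      cases hk : G.kind s
      · rw [hk] at hrec
        obtain ⟨z, ⟨hz1, hz2⟩, hzu⟩ := hB.2.2.1 s hB.1 hne hk
        have hset : G.succ s ∩ B = {z} := by
          ext w
          simp only [Finset.mem_inter, Finset.mem_singleton]
          exact ⟨fun hw => hzu w hw, fun hw => hw ▸ ⟨hz1, hz2⟩⟩
        rw [hset, Finset.sum_singleton, hrec]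
        calc (G.succ s).inf (fun m => G.cost s m + p m)
            ≤ G.cost s z + p z := Finset.inf_le hz1
          _ ≤ _ := add_le_add_right
              (ih z hz1 _ (subBase_isSolutionBase htree hB hz1 hz2)) _
      · rw [hk] at hrec
        have hsub : G.succ s ⊆ B := fun z hz => hB.2.2.2 s hB.1 hne hk z hz
        rw [Finset.inter_eq_left.2 hsub, hrec]
        simp only [comb]
        refine Finset.sum_le_sum (fun m hm => ?_)
        exact add_le_add_right
          (ih m hm _ (subBase_isSolutionBase htree hB hm (hsub hm))) _


/-- Existence of a greedy solution base achieving cost `p s`. -/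
theorem greedy_exists
    (htree : ∀ x n n' : V, x ∈ G.succ n → x ∈ G.succ n' → n = n')
    (h : V → ℝ≥0∞) {p : V → ℝ≥0∞} (hp : IsProofCost G h .sum p) :
    ∀ s : V, ∃ B : Finset V, IsGreedySolutionBase G p s B ∧ baseCost G h B = p s ∧
      ∀ x ∈ B, Relation.ReflTransGen G.chld x s := by
  intro s
  induction s using G.acyclic.induction with
  | _ s ih =>
    by_cases hne : G.succ s = ∅
    · refine ⟨{s}, ⟨⟨Finset.mem_singleton_self s, ?_, ?_, ?_⟩, ?_⟩,
        baseCost_singleton h hp hne, ?_⟩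
      · intro y hy hys
        exact absurd (Finset.mem_singleton.1 hy) hys
      · intro y hy hne'
        rw [Finset.mem_singleton.1 hy] at hne'
        exact absurd hne hne'
      · intro y hy hne'
        rw [Finset.mem_singleton.1 hy] at hne'
        exact absurd hne hne'
      · intro y hy hne'
        rw [Finset.mem_singleton.1 hy] at hne'
        exact absurd hne hne'
      · intro x hx
        obtain rfl := Finset.mem_singleton.1 hx
        exact Relation.ReflTransGen.refl
    · cases hk : G.kind s
      · -- OR node
        obtain ⟨m, hm, hmin⟩ := Finset.exists_mem_eq_inf (G.succ s)
          (Finset.nonempty_of_ne_empty hne) (fun z => G.cost s z + p z)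
        obtain ⟨B', ⟨hB'sb, hB'g⟩, hB'c, hB'r⟩ := ih m hm
        refine ⟨insert s B', ?_⟩
        set B := insert s B' with hBdef
        have hs_notB' : s ∉ B' := fun hs =>
          G.noCyc s (Relation.TransGen.tail' (hB'r s hs) hm)
        have hup : ∀ y ∈ B', s ∉ G.succ y := fun y hy hsy =>
          G.noCyc s (Relation.TransGen.head' hsy ((hB'r y hy).tail hm))
        have honly : ∀ z ∈ G.succ s, z ∈ B → z = m := by
          intro z hz hzB
          rcases Finset.mem_insert.1 hzB with rfl | hzB'
          · exact (G.noCyc z (Relation.TransGen.single hz)).elim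
          · rcases (hB'r z hzB').cases_head with rfl | ⟨w, hw, hwm⟩
            · rfl
            · have hws : w = s := htree z w s hw hz
              rw [hws] at hwm
              exact ((G.noCyc s) (Relation.TransGen.tail' hwm hm)).elim
        have hchild : ∀ y ∈ B', G.succ y ∩ B = G.succ y ∩ B' := by
          intro y hy
          ext z
          simp only [Finset.mem_inter, hBdef, Finset.mem_insert]
          constructor
          · rintro ⟨hz1, rfl | hz2⟩
            · exact absurd hz1 (hup y hy)
            · exact ⟨hz1, hz2⟩
          · rintro ⟨hz1, hz2⟩
            exact ⟨hz1, Or.inr hz2⟩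
        have hsb : IsSolutionBase G s B := by
          refine ⟨Finset.mem_insert_self s B', ?_, ?_, ?_⟩
          · intro y hyB hys
            rcases Finset.mem_insert.1 hyB with rfl | hy'
            · exact absurd rfl hys
            · by_cases hym : y = m
              · exact ⟨s, Finset.mem_insert_self s B', hym ▸ hm⟩
              · obtain ⟨z, hz1, hz2⟩ := hB'sb.2.1 y hy' hym
                exact ⟨z, Finset.mem_insert_of_mem hz1, hz2⟩
          · intro y hyB hyne hkind
            rcases Finset.mem_insert.1 hyB with rfl | hy'
            · exact ⟨m, ⟨hm, Finset.mem_insert_of_mem hB'sb.1⟩,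
                fun z hz => honly z hz.1 hz.2⟩
            · obtain ⟨z, ⟨hz1, hz2⟩, hzu⟩ := hB'sb.2.2.1 y hy' hyne hkind
              refine ⟨z, ⟨hz1, Finset.mem_insert_of_mem hz2⟩, ?_⟩
              rintro z' ⟨hz1', hz2'⟩
              have hz'm : z' ∈ G.succ y ∩ B' := by
                rw [← hchild y hy']
                exact Finset.mem_inter.2 ⟨hz1', hz2'⟩
              exact hzu z' ⟨hz1', (Finset.mem_inter.1 hz'm).2⟩
          · intro y hyB hyne hkind z hz
            rcases Finset.mem_insert.1 hyB with rfl | hy'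
            · rw [hk] at hkind
              exact absurd hkind (by simp)
            · exact Finset.mem_insert_of_mem (hB'sb.2.2.2 y hy' hyne hkind z hz)
        have hgr : ∀ y ∈ B, G.succ y ≠ ∅ → G.kind y = .orN →
            ∀ z ∈ G.succ y, z ∈ B → ∀ w ∈ G.succ y,
              G.cost y z + p z ≤ G.cost y w + p w := by
          intro y hyB hyne hkind z hz hzB w hw
          rcases Finset.mem_insert.1 hyB with rfl | hy'
          · have hzm : z = m := honly z hz hzB
            subst hzm
            exact le_trans (le_of_eq hmin.symm) (Finset.inf_le hw)
          · have hzB' : z ∈ B' := by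
              have hmem : z ∈ G.succ y ∩ B := Finset.mem_inter.2 ⟨hz, hzB⟩
              rw [hchild y hy'] at hmem
              exact (Finset.mem_inter.1 hmem).2
            exact hB'g y hy' hyne hkind z hz hzB' w hw
        have hreach : ∀ x ∈ B, Relation.ReflTransGen G.chld x s := by
          intro x hx
          rcases Finset.mem_insert.1 hx with rfl | hx'
          · exact Relation.ReflTransGen.refl
          · exact (hB'r x hx').tail hm
        have hsubeq : subBase G B m = B' := by
          ext y
          rw [mem_subBase]
          constructor
          · rintro ⟨hyB, hyr⟩
            rcases Finset.mem_insert.1 hyB with rfl | hy'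
            · exact ((G.noCyc y) (Relation.TransGen.tail' hyr hm)).elim
            · exact hy'
          · intro hy
            exact ⟨Finset.mem_insert_of_mem hy, hB'r y hy⟩
        have hset : G.succ s ∩ B = {m} := by
          ext w
          simp only [Finset.mem_inter, Finset.mem_singleton]
          refine ⟨fun hw => honly w hw.1 hw.2, ?_⟩
          rintro rfl
          exact ⟨hm, Finset.mem_insert_of_mem hB'sb.1⟩
        have hps : p s = (G.succ s).inf (fun z => G.cost s z + p z) := by
          have hh := (hp s).2 hne
          rw [hk] at hh
          exact hh
        have hcost : baseCost G h B = p s := by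
          rw [baseCost_decomp htree h hsb hne, hset, Finset.sum_singleton, hsubeq,
            hB'c, hps]
          exact hmin.symm
        exact ⟨⟨hsb, hgr⟩, hcost, hreach⟩
      · -- AND node
        have ih2 : ∀ z : V, ∃ B, z ∈ G.succ s →
            (IsGreedySolutionBase G p z B ∧ baseCost G h B = p z ∧
              ∀ x ∈ B, Relation.ReflTransGen G.chld x z) := by
          intro z
          by_cases hz : z ∈ G.succ s
          · obtain ⟨B, hB⟩ := ih z hz
            exact ⟨B, fun _ => hB⟩
          · exact ⟨∅, fun hzz => absurd hzz hz⟩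
        choose f hf using ih2
        have hfsb : ∀ m ∈ G.succ s, IsSolutionBase G m (f m) :=
          fun m hm => (hf m hm).1.1
        have hfg : ∀ m ∈ G.succ s, ∀ y ∈ f m, G.succ y ≠ ∅ → G.kind y = .orN →
            ∀ z ∈ G.succ y, z ∈ f m → ∀ w ∈ G.succ y,
              G.cost y z + p z ≤ G.cost y w + p w :=
          fun m hm => (hf m hm).1.2
        have hfc : ∀ m ∈ G.succ s, baseCost G h (f m) = p m :=
          fun m hm => (hf m hm).2.1
        have hfr : ∀ m ∈ G.succ s, ∀ x ∈ f m, Relation.ReflTransGen G.chld x m :=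
          fun m hm => (hf m hm).2.2
        refine ⟨insert s ((G.succ s).biUnion f), ?_⟩
        set B := insert s ((G.succ s).biUnion f) with hBdef
        have hmemB : ∀ {y : V}, y ∈ B ↔ y = s ∨ ∃ m ∈ G.succ s, y ∈ f m := by
          intro y
          simp [hBdef]
        have hup : ∀ m ∈ G.succ s, ∀ y ∈ f m, s ∉ G.succ y := fun m hm y hy hsy =>
          G.noCyc s (Relation.TransGen.head' hsy ((hfr m hm y hy).tail hm))
        have hagree : ∀ {y m m' : V}, m ∈ G.succ s → m' ∈ G.succ s →
            Relation.ReflTransGen G.chld y m → Relation.ReflTransGen G.chld y m' →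
            m = m' := by
          intro y m m' hm hm' h1 h2
          rcases G.chain htree h1 h2 with hc | hc
          · exact G.sibling htree hm hm' hc
          · exact (G.sibling htree hm' hm hc).symm
        have hchild : ∀ m ∈ G.succ s, ∀ y ∈ f m, G.succ y ∩ B = G.succ y ∩ f m := by
          intro m hm y hy
          ext z
          simp only [Finset.mem_inter]
          constructor
          · rintro ⟨hz1, hz2⟩
            refine ⟨hz1, ?_⟩
            have hzm : Relation.ReflTransGen G.chld z m :=
              Relation.ReflTransGen.head hz1 (hfr m hm y hy)
            rcases hmemB.1 hz2 with rfl | ⟨m', hm', hzf⟩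
            · exact absurd hz1 (hup m hm y hy)
            · have heq : m' = m := hagree hm' hm (hfr m' hm' z hzf) hzm
              exact heq ▸ hzf
          · rintro ⟨hz1, hz2⟩
            exact ⟨hz1, hmemB.2 (Or.inr ⟨m, hm, hz2⟩)⟩
        have hsb : IsSolutionBase G s B := by
          refine ⟨hmemB.2 (Or.inl rfl), ?_, ?_, ?_⟩
          · intro y hyB hys
            rcases hmemB.1 hyB with rfl | ⟨m, hm, hy⟩
            · exact absurd rfl hys
            · by_cases hym : y = m
              · exact ⟨s, hmemB.2 (Or.inl rfl), hym ▸ hm⟩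
              · obtain ⟨z, hz1, hz2⟩ := (hfsb m hm).2.1 y hy hym
                exact ⟨z, hmemB.2 (Or.inr ⟨m, hm, hz1⟩), hz2⟩
          · intro y hyB hyne hkind
            rcases hmemB.1 hyB with rfl | ⟨m, hm, hy⟩
            · rw [hk] at hkind
              exact absurd hkind (by simp)
            · obtain ⟨z, ⟨hz1, hz2⟩, hzu⟩ := (hfsb m hm).2.2.1 y hy hyne hkind
              refine ⟨z, ⟨hz1, hmemB.2 (Or.inr ⟨m, hm, hz2⟩)⟩, ?_⟩
              rintro z' ⟨hz1', hz2'⟩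
              have hz'm : z' ∈ G.succ y ∩ f m := by
                rw [← hchild m hm y hy]
                exact Finset.mem_inter.2 ⟨hz1', hz2'⟩
              exact hzu z' ⟨hz1', (Finset.mem_inter.1 hz'm).2⟩
          · intro y hyB hyne hkind z hz
            rcases hmemB.1 hyB with rfl | ⟨m, hm, hy⟩
            · exact hmemB.2 (Or.inr ⟨z, hz, (hfsb z hz).1⟩)
            · exact hmemB.2 (Or.inr ⟨m, hm, (hfsb m hm).2.2.2 y hy hyne hkind z hz⟩)
        have hgr : ∀ y ∈ B, G.succ y ≠ ∅ → G.kind y = .orN →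
            ∀ z ∈ G.succ y, z ∈ B → ∀ w ∈ G.succ y,
              G.cost y z + p z ≤ G.cost y w + p w := by
          intro y hyB hyne hkind z hz hzB w hw
          rcases hmemB.1 hyB with rfl | ⟨m, hm, hy⟩
          · rw [hk] at hkind
            exact absurd hkind (by simp)
          · have hzf : z ∈ f m := by
              have hmem : z ∈ G.succ y ∩ B := Finset.mem_inter.2 ⟨hz, hzB⟩
              rw [hchild m hm y hy] at hmem
              exact (Finset.mem_inter.1 hmem).2
            exact hfg m hm y hy hyne hkind z hz hzf w hw
        have hreach : ∀ x ∈ B, Relation.ReflTransGen G.chld x s := by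
          intro x hx
          rcases hmemB.1 hx with rfl | ⟨m, hm, hxm⟩
          · exact Relation.ReflTransGen.refl
          · exact (hfr m hm x hxm).tail hm
        have hsub : G.succ s ⊆ B := fun z hz => hmemB.2 (Or.inr ⟨z, hz, (hfsb z hz).1⟩)
        have hsubeq : ∀ m ∈ G.succ s, subBase G B m = f m := by
          intro m hm
          ext y
          rw [mem_subBase]
          constructor
          · rintro ⟨hyB, hyr⟩
            rcases hmemB.1 hyB with rfl | ⟨m', hm', hyf⟩
            · exact ((G.noCyc y) (Relation.TransGen.tail' hyr hm)).elim
            · have heq : m' = m := hagree hm' hm (hfr m' hm' y hyf) hyr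
              exact heq ▸ hyf
          · intro hy
            exact ⟨hmemB.2 (Or.inr ⟨m, hm, hy⟩), hfr m hm y hy⟩
        have hps : p s = ∑ m ∈ G.succ s, (G.cost s m + p m) := by
          have hh := (hp s).2 hne
          rw [hk] at hh
          exact hh
        have hcost : baseCost G h B = p s := by
          rw [baseCost_decomp htree h hsb hne, Finset.inter_eq_left.2 hsub, hps]
          exact Finset.sum_congr rfl (fun m hm => by rw [hsubeq m hm, hfc m hm])
        exact ⟨⟨hsb, hgr⟩, hcost, hreach⟩

end AOCost

/-- Let `T` be a finite AND/OR tree (at most one parent per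
node) with root `s`, edge costs `c`, heuristic `h` at non-terminal leaves, and
cost function `p` computed with `Ψ = sum`. Then `p s` equals the minimum of
the base cost over all solution bases rooted at `s`, and this minimum is
attained by a greedy solution base (one that includes, at each internal OR
node, a child minimizing `c + p`, and all children at each AND node): the
partial solution graph traced by AO* following minimum-cost children achieves
the recursive cost estimate `p s`. -/
theorem proof_cost_eq_min_base_cost {V : Type} [Fintype V] [DecidableEq V]
    (G : AOGraph V)
    (htree : ∀ x n n' : V, x ∈ G.succ n → x ∈ G.succ n' → n = n')
    (h : V → ℝ≥0∞) (p : V → ℝ≥0∞)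
    (hp : IsProofCost G h .sum p) (s : V) :
    p s = sInf {c : ℝ≥0∞ | ∃ B : Finset V, IsSolutionBase G s B ∧ c = baseCost G h B} ∧
    ∃ B : Finset V, IsGreedySolutionBase G p s B ∧ baseCost G h B = p s := by
  obtain ⟨B, hgB, hc, -⟩ := greedy_exists htree h hp s
  constructor
  · refine le_antisymm (le_sInf ?_) (sInf_le ⟨B, hgB.1, hc.symm⟩)
    rintro c ⟨B', hB', rfl⟩
    exact p_le_baseCost htree h hp s B' hB'
  · exact ⟨B, hgB, hc⟩
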